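/- Restriction to the λ-part maps any Littlewood-Richardson skew tableau S of shape λ*α and content ν (with λ a two-row partition, αᵢ = Σ_{j>i} μⱼ, νᵢ = αᵢ + μᵢ, ν_ℓ = μ_ℓ) to a semistandard Young tableau of shape λ and content μ = ν − (α, 0). -/

import Mathlib

open Finset

/-- The two-row Young diagram with row lengths `l1` (top) and `l2` (bottom).
In intended uses `l2 ≤ l1`. -/
def twoRow (l1 l2 : ℕ) : YoungDiagram :=
  YoungDiagram.ofRowLens [max l1 l2, l2] (by
    simp [List.sortedGE_iff_pairwise, le_max_right])

/-- The number of cells of `T` with entry `v` (entries are 0-indexed). -/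
def content {sh : YoungDiagram} (T : SemistandardYoungTableau sh) (v : ℕ) : ℕ :=
  (sh.cells.filter fun c => T c.1 c.2 = v).card

/-- Kostka number: the number of semistandard Young tableaux of shape `sh`
with content `c` (entries 0-indexed: `c v` copies of entry `v`). -/
noncomputable def kostka (sh : YoungDiagram) (c : ℕ → ℕ) : ℕ :=
  Nat.card {T : SemistandardYoungTableau sh // ∀ v, content T v = c v}

/-- A skew semistandard tableau on the skew shape whose `i`-th row occupies
columns `[lo i, lo i + len i)`: rows weakly increase, columns strictly increase,
entries vanish off the shape. -/
structure SkewTab (lo len : ℕ → ℕ) where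
  entry : ℕ → ℕ → ℕ
  rowWeak : ∀ i j1 j2, lo i ≤ j1 → j1 ≤ j2 → j2 < lo i + len i → entry i j1 ≤ entry i j2
  colStrict : ∀ i j, lo i ≤ j → j < lo i + len i → lo (i + 1) ≤ j →
    j < lo (i + 1) + len (i + 1) → entry i j < entry (i + 1) j
  zeros : ∀ i j, ¬(lo i ≤ j ∧ j < lo i + len i) → entry i j = 0

/-- The reading word: each row read right to left, rows top to bottom. -/
def readWord (lo len : ℕ → ℕ) (rows : ℕ) (T : SkewTab lo len) : List ℕ :=
  (List.range rows).flatMap fun i =>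
    (List.range (len i)).reverse.map fun t => T.entry i (lo i + t)

/-- A word is a lattice word: every prefix has at least as many `v`'s as `(v+1)`'s. -/
def IsLattice (w : List ℕ) : Prop := ∀ n v, (w.take n).count (v + 1) ≤ (w.take n).count v

/-- Number of copies of `v` in row `i` of the skew tableau `T`. -/
def rowContent (lo len : ℕ → ℕ) (T : SkewTab lo len) (i v : ℕ) : ℕ :=
  ((Finset.Ico (lo i) (lo i + len i)).filter fun j => T.entry i j = v).card

/-- Total number of copies of `v` in the skew tableau `T` (with `rows` rows). -/
def skewContent (lo len : ℕ → ℕ) (rows : ℕ) (T : SkewTab lo len) (v : ℕ) : ℕ :=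
  ∑ i ∈ Finset.range rows, rowContent lo len T i v

/-- Left endpoints of the rows of the skew shape `λ*α` where `λ = (l1, l2)` and
`α` has `m` rows: the `m` rows of `α` start at column `l1`, the two rows of `λ` at column 0. -/
def starLo (l1 m : ℕ) (i : ℕ) : ℕ := if i < m then l1 else 0

/-- Row lengths of the skew shape `λ*α`, `λ = (l1, l2)`, `α` with `m` rows. -/
def starLen (l1 l2 : ℕ) (a : ℕ → ℕ) (m : ℕ) (i : ℕ) : ℕ :=
  if i < m then a i else if i = m then l1 else if i = m + 1 then l2 else 0


section Aux
variable {lo len : ℕ → ℕ} (T : SkewTab lo len)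

def rowWord (i : ℕ) : List ℕ :=
  (List.range (len i)).reverse.map fun t => T.entry i (lo i + t)

lemma readWord_succ (r : ℕ) :
    readWord lo len (r+1) T = readWord lo len r T ++ rowWord T r := by
  simp [readWord, rowWord, List.range_succ]

lemma length_rowWord (i : ℕ) : (rowWord T i).length = len i := by simp [rowWord]

lemma length_readWord (r : ℕ) :
    (readWord lo len r T).length = ∑ k ∈ Finset.range r, len k := by
  induction r with
  | zero => simp [readWord]
  | succ n ih => rw [readWord_succ, List.length_append, ih, length_rowWord, Finset.sum_range_succ]

lemma readWord_prefix {r R : ℕ} (h : r ≤ R) :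
    readWord lo len r T <+: readWord lo len R T := by
  induction R with
  | zero => interval_cases r; exact List.prefix_refl _
  | succ n ih =>
    rcases Nat.lt_or_ge r (n+1) with h' | h'
    · exact (ih (by omega)).trans (by rw [readWord_succ]; exact List.prefix_append _ _)
    · have : r = n + 1 := le_antisymm h h'
      subst this; exact List.prefix_refl _

lemma mem_readWord {x : ℕ} {r : ℕ} (hx : x ∈ readWord lo len r T) :
    ∃ k < r, ∃ t < len k, x = T.entry k (lo k + t) := by
  simp only [readWord, List.mem_flatMap, List.mem_map, List.mem_reverse, List.mem_range] at hx
  obtain ⟨k, hk, t, ht, rfl⟩ := hx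
  exact ⟨k, hk, t, ht, rfl⟩

end Aux

lemma mem_twoRow {l1 l2 i j : ℕ} (hl : l2 ≤ l1) :
    (i, j) ∈ twoRow l1 l2 ↔ (i = 0 ∧ j < l1) ∨ (i = 1 ∧ j < l2) := by
  rw [twoRow, YoungDiagram.mem_ofRowLens]
  constructor
  · rintro ⟨h2, hj⟩
    simp only [List.length_cons, List.length_nil] at h2
    interval_cases i
    · left; simp only [List.getElem_cons_zero] at hj; exact ⟨rfl, by omega⟩
    · right; simp only [List.getElem_cons_succ, List.getElem_cons_zero] at hj; exact ⟨rfl, hj⟩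
  · rintro (⟨rfl, hj⟩ | ⟨rfl, hj⟩)
    · exact ⟨by simp, by simpa using by omega⟩
    · exact ⟨by simp, by simpa using hj⟩

lemma cells_twoRow {l1 l2 : ℕ} (hl : l2 ≤ l1) :
    (twoRow l1 l2).cells = ((Finset.range l1).image fun j => (0, j)) ∪
      ((Finset.range l2).image fun j => (1, j)) := by
  ext ⟨i, j⟩
  rw [YoungDiagram.mem_cells, mem_twoRow hl]
  simp only [Finset.mem_union, Finset.mem_image, Finset.mem_range, Prod.mk.injEq]
  constructor
  · rintro (⟨rfl, hj⟩ | ⟨rfl, hj⟩)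
    · exact Or.inl ⟨j, hj, rfl, rfl⟩
    · exact Or.inr ⟨j, hj, rfl, rfl⟩
  · rintro (⟨x, hx, rfl, rfl⟩ | ⟨x, hx, rfl, rfl⟩)
    · exact Or.inl ⟨rfl, hx⟩
    · exact Or.inr ⟨rfl, hx⟩

lemma main_aux (l1 l2 L m : ℕ) (a lo len mu : ℕ → ℕ) (hl : l2 ≤ l1) (hmL : m + 1 = L)
    (hlo : lo = starLo l1 m) (hlen : len = starLen l1 l2 a m)
    (ha : a = fun i => ∑ w ∈ Finset.Ico (i + 1) L, mu w)
    (hmu : ∀ i, L ≤ i → mu i = 0)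
    (S : SkewTab lo len) (hLR : IsLattice (readWord lo len (L + 1) S))
    (hcont : ∀ v, skewContent lo len (L + 1) S v = ∑ w ∈ Finset.Ico v L, mu w) :
    ∃ T : SemistandardYoungTableau (twoRow l1 l2),
      (∀ i j, (i, j) ∈ twoRow l1 l2 → T i j = S.entry (m + i) j) ∧
      ∀ v, content T v = mu v := by
  have hlo_lt : ∀ i, i < m → lo i = l1 := by intro i hi; rw [hlo]; simp [starLo, hi]
  have hlo_m : lo m = 0 := by rw [hlo]; simp [starLo]
  have hlo_m1 : lo (m + 1) = 0 := by rw [hlo]; simp [starLo]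
  have hlen_lt : ∀ i, i < m → len i = a i := by intro i hi; rw [hlen]; simp [starLen, hi]
  have hlen_m : len m = l1 := by rw [hlen]; simp [starLen]
  have hlen_m1 : len (m + 1) = l2 := by
    rw [hlen, starLen, if_neg (by omega), if_neg (by omega)]
    simp
  have ha_anti : ∀ k i : ℕ, k ≤ i → a i ≤ a k := by
    intro k i h
    rw [ha]
    exact Finset.sum_le_sum_of_subset (Finset.Ico_subset_Ico (by omega) le_rfl)
  -- All entries of row i (for i < m) of the α-part are equal to i.
  have const : ∀ i, i < m → ∀ t, t < len i → S.entry i (lo i + t) = i := by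
    intro i
    induction i using Nat.strong_induction_on with
    | _ i IH =>
      intro him
      have lb : ∀ t, t < len i → i ≤ S.entry i (lo i + t) := by
        intro t ht
        cases i with
        | zero => exact Nat.zero_le _
        | succ k =>
          have hkm : k < m := by omega
          have hlenk : len (k+1) ≤ len k := by
            rw [hlen_lt k hkm, hlen_lt (k+1) him]; exact ha_anti k (k+1) (by omega)
          have hlok : lo (k+1) = lo k := by rw [hlo_lt k hkm, hlo_lt (k+1) him]
          have hprev : S.entry k (lo (k+1) + t) = k := by
            rw [hlok]; exact IH k (by omega) hkm t (by omega)
          have hcs := S.colStrict k (lo (k+1) + t) (by omega) (by omega) (by omega) (by omega)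
          omega
      intro t ht
      have hpos : 0 < len i := by omega
      set q : ℕ := len i - 1 with hqdef
      have hub : S.entry i (lo i + q) ≤ i := by
        by_contra hub
        push_neg at hub
        set c := S.entry i (lo i + q) with hcdef
        set n := (∑ k ∈ Finset.range i, len k) + 1 with hndef
        have hrowi : rowWord S i
            = c :: ((List.range q).reverse.map fun t => S.entry i (lo i + t)) := by
          rw [rowWord, show len i = q + 1 by omega, List.range_succ, List.reverse_append]
          simp
          rfl
        have hpre : (readWord lo len (L+1) S).take n = readWord lo len i S ++ [c] := by
          obtain ⟨s, hs⟩ := readWord_prefix S (show i + 1 ≤ L + 1 by omega)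
          have hfull : readWord lo len (L+1) S
              = readWord lo len i S ++ (rowWord S i ++ s) := by
            rw [← List.append_assoc, ← readWord_succ, hs]
          rw [hfull, List.take_append, length_readWord,
            List.take_of_length_le (by rw [length_readWord]; omega)]
          congr 1
          rw [show n - (∑ k ∈ Finset.range i, len k) = 1 by omega, hrowi]
          simp
        have hmemlt : ∀ x ∈ readWord lo len i S, x < i := by
          intro x hx
          obtain ⟨k, hk, t', ht', rfl⟩ := mem_readWord S hx
          rw [IH k hk (by omega) t' ht']
          exact hk
        have hlat := hLR n (c - 1)
        rw [hpre, show c - 1 + 1 = c by omega] at hlat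
        have h0 : (readWord lo len i S ++ [c]).count (c-1) = 0 := by
          rw [List.count_eq_zero]
          intro hmem'
          rcases List.mem_append.mp hmem' with h | h
          · have := hmemlt _ h; omega
          · simp at h; omega
        have h1 : 0 < (readWord lo len i S ++ [c]).count c := by
          rw [List.count_pos_iff]
          exact List.mem_append.mpr (Or.inr (by simp))
        omega
      have hle : S.entry i (lo i + t) ≤ S.entry i (lo i + q) :=
        S.rowWeak i (lo i + t) (lo i + q) (by omega) (by omega) (by omega)
      have := lb t ht
      omega
  -- row contents of the α-part
  have hconst_rc : ∀ i, i < m → ∀ v,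
      rowContent lo len S i v = if v = i then len i else 0 := by
    intro i hi v
    have hall : ∀ j ∈ Finset.Ico (lo i) (lo i + len i), S.entry i j = i := by
      intro j hj
      rw [Finset.mem_Ico] at hj
      have := const i hi (j - lo i) (by omega)
      rwa [Nat.add_sub_cancel' hj.1] at this
    rw [rowContent]
    by_cases hv : v = i
    · subst hv
      rw [Finset.filter_true_of_mem (fun j hj => hall j hj), if_pos rfl]
      simp
    · rw [Finset.filter_false_of_mem, if_neg hv]
      · simp
      · intro j hj hp
        rw [hall j hj] at hp
        exact hv hp.symm
  -- the two λ rows carry content μ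
  have hlam : ∀ v, rowContent lo len S m v + rowContent lo len S (m+1) v = mu v := by
    intro v
    have hsplit := hcont v
    rw [skewContent, show L + 1 = m + 2 by omega, Finset.sum_range_succ,
      Finset.sum_range_succ] at hsplit
    have hsc : (∑ i ∈ Finset.range m, rowContent lo len S i v)
        = if v < m then len v else 0 := by
      rw [Finset.sum_congr rfl (fun i hi => hconst_rc i (Finset.mem_range.mp hi) v),
        Finset.sum_ite_eq (Finset.range m) v len]
      simp
    rw [hsc] at hsplit
    by_cases hvm : v < m
    · rw [if_pos hvm, hlen_lt v hvm] at hsplit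
      have hIco : (∑ w ∈ Finset.Ico v L, mu w) = mu v + a v := by
        rw [ha]
        exact Finset.sum_eq_sum_Ico_succ_bot (by omega) mu
      rw [hIco] at hsplit
      omega
    · rw [if_neg hvm] at hsplit
      by_cases hvL : v < L
      · have hvm' : v = m := by omega
        have hIco : (∑ w ∈ Finset.Ico v L, mu w) = mu v := by
          rw [show L = v + 1 by omega]
          simp
        rw [hIco] at hsplit
        omega
      · have hIco : (∑ w ∈ Finset.Ico v L, mu w) = 0 := by
          rw [Finset.Ico_eq_empty (by omega)]; simp
        rw [hIco] at hsplit
        rw [hmu v (by omega)]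
        omega
  -- build the tableau
  set Tf : ℕ → ℕ → ℕ := fun i j => if (i, j) ∈ twoRow l1 l2 then S.entry (m + i) j else 0
    with hTfdef
  have hTf0 : ∀ j, j < l1 → Tf 0 j = S.entry m j := by
    intro j hj
    rw [hTfdef]
    simp only
    rw [if_pos ((mem_twoRow hl).mpr (Or.inl ⟨rfl, hj⟩)), Nat.add_zero]
  have hTf1 : ∀ j, j < l2 → Tf 1 j = S.entry (m + 1) j := by
    intro j hj
    rw [hTfdef]
    simp only
    rw [if_pos ((mem_twoRow hl).mpr (Or.inr ⟨rfl, hj⟩))]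
  have hrow : ∀ {i j1 j2 : ℕ}, j1 < j2 → (i, j2) ∈ twoRow l1 l2 → Tf i j1 ≤ Tf i j2 := by
    intro i j1 j2 hj hmem
    rcases (mem_twoRow hl).mp hmem with ⟨rfl, hj2⟩ | ⟨rfl, hj2⟩
    · rw [hTf0 j1 (by omega), hTf0 j2 hj2]
      exact S.rowWeak m j1 j2 (by omega) (by omega) (by omega)
    · rw [hTf1 j1 (by omega), hTf1 j2 hj2]
      exact S.rowWeak (m+1) j1 j2 (by omega) (by omega) (by omega)
  have hcol : ∀ {i1 i2 j : ℕ}, i1 < i2 → (i2, j) ∈ twoRow l1 l2 → Tf i1 j < Tf i2 j := by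
    intro i1 i2 j hi hmem
    rcases (mem_twoRow hl).mp hmem with ⟨rfl, hj2⟩ | ⟨rfl, hj2⟩
    · omega
    · have hi1 : i1 = 0 := by omega
      subst hi1
      rw [hTf0 j (by omega), hTf1 j hj2]
      exact S.colStrict m j (by omega) (by omega) (by omega) (by omega)
  have hzero : ∀ {i j : ℕ}, (i, j) ∉ twoRow l1 l2 → Tf i j = 0 := by
    intro i j hmem
    rw [hTfdef]
    simp only
    rw [if_neg hmem]
  refine ⟨⟨Tf, hrow, hcol, hzero⟩, ?_, ?_⟩
  · intro i j hmem
    show Tf i j = S.entry (m + i) j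
    rw [hTfdef]
    simp only
    rw [if_pos hmem]
  · intro v
    show ((twoRow l1 l2).cells.filter fun c => Tf c.1 c.2 = v).card = mu v
    rw [cells_twoRow hl, Finset.filter_union,
      Finset.card_union_of_disjoint, Finset.filter_image, Finset.filter_image,
      Finset.card_image_of_injective _ (fun x y h => by simpa using h),
      Finset.card_image_of_injective _ (fun x y h => by simpa using h)]
    · have h0 : ((Finset.range l1).filter fun j => Tf (0, j).1 (0, j).2 = v)
          = (Finset.range l1).filter fun j => S.entry m j = v := by
        apply Finset.filter_congr
        intro j hj
        rw [Finset.mem_range] at hj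
        rw [hTf0 j hj]
      have h1 : ((Finset.range l2).filter fun j => Tf (1, j).1 (1, j).2 = v)
          = (Finset.range l2).filter fun j => S.entry (m+1) j = v := by
        apply Finset.filter_congr
        intro j hj
        rw [Finset.mem_range] at hj
        rw [hTf1 j hj]
      have hrm : rowContent lo len S m v
          = ((Finset.range l1).filter fun j => S.entry m j = v).card := by
        rw [rowContent, hlo_m, hlen_m, Finset.range_eq_Ico, Nat.zero_add]
      have hrm1 : rowContent lo len S (m+1) v
          = ((Finset.range l2).filter fun j => S.entry (m+1) j = v).card := by
        rw [rowContent, hlo_m1, hlen_m1, Finset.range_eq_Ico, Nat.zero_add]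
      rw [h0, h1, ← hlam v, hrm, hrm1]
    · rw [Finset.disjoint_left]
      intro c hc1 hc2
      rw [Finset.mem_filter, Finset.mem_image] at hc1 hc2
      obtain ⟨⟨x, _, rfl⟩, _⟩ := hc1
      obtain ⟨⟨y, _, hy⟩, _⟩ := hc2
      simp at hy

theorem stmt18 (l1 l2 L : ℕ) (hl : l2 ≤ l1) (hL : 1 ≤ L) (mu : ℕ → ℕ)
    (hmu : ∀ i, L ≤ i → mu i = 0) (hsum : l1 + l2 = ∑ j ∈ Finset.range L, mu j)
    (S : SkewTab (starLo l1 (L - 1)) (starLen l1 l2 (fun i => ∑ w ∈ Finset.Ico (i + 1) L, mu w) (L - 1)))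
    (hLR : IsLattice (readWord (starLo l1 (L - 1)) (starLen l1 l2 (fun i => ∑ w ∈ Finset.Ico (i + 1) L, mu w) (L - 1)) (L + 1) S))
    (hcont : ∀ v, skewContent (starLo l1 (L - 1)) (starLen l1 l2 (fun i => ∑ w ∈ Finset.Ico (i + 1) L, mu w) (L - 1)) (L + 1) S v =
      ∑ w ∈ Finset.Ico v L, mu w) :
    ∃ T : SemistandardYoungTableau (twoRow l1 l2),
      (∀ i j, (i, j) ∈ twoRow l1 l2 → T i j = S.entry ((L - 1) + i) j) ∧
      ∀ v, content T v = mu v :=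
  main_aux l1 l2 L (L - 1) _ _ _ mu hl (by omega) rfl rfl rfl hmu S hLR hcont
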